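/- Energy upper bound: if u: ℝ^n → (-1,1) is a minimizer of the Allen-Cahn energy E_{B_R}(u) = ∫_{B_R} (|∇u|^2/2 + (1-u^2)^2/4) dx in every ball, and |u| ≤ 1, |∇u| ≤ C_0 in ℝ^n, then there exists a constant C depending only on n and C_0 such that E_{B_R}(u) ≤ C R^{n-1} for all R ≥ 1. -/

import Mathlib

open MeasureTheory Set

lemma ac_deriv_bound : ∃ M : ℝ, 0 ≤ M ∧ ∀ t : ℝ, |deriv Real.smoothTransition t| ≤ M := by
  have hc : Continuous (deriv Real.smoothTransition) :=
    (Real.smoothTransition.contDiff (n := ⊤)).continuous_deriv (by exact_mod_cast le_top)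
  obtain ⟨B, hB⟩ := (isCompact_Icc (a := (-1:ℝ)) (b := 2)).exists_bound_of_continuousOn
    hc.continuousOn
  refine ⟨max B 0, le_max_right _ _, fun t => ?_⟩
  by_cases ht : t ∈ Icc (-1:ℝ) 2
  · exact le_trans (by simpa using hB t ht) (le_max_left _ _)
  · have h0 : deriv Real.smoothTransition t = 0 := by
      rcases lt_or_ge t (-1) with h | h
      · have heq : Real.smoothTransition =ᶠ[nhds t] fun _ => (0:ℝ) := by
          filter_upwards [eventually_lt_nhds (show t < 0 by linarith)] with s hs
          exact Real.smoothTransition.zero_of_nonpos hs.le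
        rw [heq.deriv_eq, deriv_const]
      · have h2 : 2 < t := by
          rcases lt_or_ge 2 t with h' | h'
          · exact h'
          · exact absurd ⟨h, h'⟩ ht
        have heq : Real.smoothTransition =ᶠ[nhds t] fun _ => (1:ℝ) := by
          filter_upwards [eventually_gt_nhds (show (1:ℝ) < t by linarith)] with s hs
          exact Real.smoothTransition.one_of_one_le hs.le
        rw [heq.deriv_eq, deriv_const]
    simp [h0]

lemma ac_pow_sub_pow {a b : ℝ} (hb : 0 ≤ b) (hab : b ≤ a) (n : ℕ) :
    a ^ n - b ^ n ≤ (n : ℝ) * a ^ (n - 1) * (a - b) := by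
  have ha : 0 ≤ a := hb.trans hab
  rw [← geom_sum₂_mul a b n]
  have hsum : (∑ i ∈ Finset.range n, a ^ i * b ^ (n - 1 - i)) ≤ (n : ℝ) * a ^ (n-1) := by
    have := Finset.sum_le_card_nsmul (Finset.range n)
      (fun i => a ^ i * b ^ (n - 1 - i)) (a ^ (n-1)) (fun i hi => by
        have hi' : i ≤ n - 1 := Nat.le_sub_one_of_lt (Finset.mem_range.mp hi)
        calc a ^ i * b ^ (n - 1 - i) ≤ a ^ i * a ^ (n - 1 - i) := by
              exact mul_le_mul_of_nonneg_left (pow_le_pow_left₀ hb hab _) (pow_nonneg ha i)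
          _ = a ^ (n - 1) := by rw [← pow_add, Nat.add_sub_cancel' hi'])
    simpa [Finset.card_range, nsmul_eq_mul] using this
  exact mul_le_mul_of_nonneg_right hsum (sub_nonneg.2 hab)

set_option maxHeartbeats 1000000 in
set_option synthInstance.maxHeartbeats 400000 in
/-- Energy upper bound for minimizers of the Allen-Cahn energy: there is a constant `C`
depending only on `n` and `C₀` such that any minimizer `u : ℝⁿ → (-1,1)` with
`|∇u| ≤ C₀` satisfies `E_{B_R}(u) ≤ C R^{n-1}` for all `R ≥ 1`. -/
theorem allen_cahn_energy_upper_bound (n : ℕ) (C₀ : ℝ) :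
    ∃ C : ℝ, ∀ u : EuclideanSpace ℝ (Fin n) → ℝ, ContDiff ℝ 1 u →
      (∀ x, u x ∈ Set.Ioo (-1 : ℝ) 1) → (∀ x, ‖gradient u x‖ ≤ C₀) →
      (∀ R > (0 : ℝ), ∀ v : EuclideanSpace ℝ (Fin n) → ℝ, ContDiff ℝ 1 v →
        (∀ x ∉ Metric.ball (0 : EuclideanSpace ℝ (Fin n)) R, v x = u x) →
        (∫ x in Metric.ball (0 : EuclideanSpace ℝ (Fin n)) R,
            (‖gradient u x‖ ^ 2 / 2 + (1 - u x ^ 2) ^ 2 / 4))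
          ≤ ∫ x in Metric.ball (0 : EuclideanSpace ℝ (Fin n)) R,
              (‖gradient v x‖ ^ 2 / 2 + (1 - v x ^ 2) ^ 2 / 4)) →
      ∀ R : ℝ, 1 ≤ R →
        (∫ x in Metric.ball (0 : EuclideanSpace ℝ (Fin n)) R,
            (‖gradient u x‖ ^ 2 / 2 + (1 - u x ^ 2) ^ 2 / 4)) ≤ C * R ^ (n - 1) := by
  obtain ⟨M, hM0, hM⟩ := ac_deriv_bound
  set vbr : ℝ := (volume (Metric.ball (0 : EuclideanSpace ℝ (Fin n)) 1)).toReal with hvbr_def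
  have hvbr0 : 0 ≤ vbr := ENNReal.toReal_nonneg
  clear_value vbr
  set K : ℝ := 2*C₀ + 6*M with hK_def
  set K₂ : ℝ := K^2/2 + 1/4 with hK₂_def
  clear_value K K₂
  refine ⟨K₂ * ((n:ℝ) * vbr), ?_⟩
  intro u hu hu1 hgrad hmin R hR
  have hRpos : (0:ℝ) < R := by linarith
  set r : ℝ := R - 1/2 with hr_def
  clear_value r
  have hr0 : (0:ℝ) < r := by rw [hr_def]; linarith
  have hrR : r < R := by rw [hr_def]; linarith
  set d : ℝ := R - 1/4 with hd_def
  clear_value d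
  have hd : (0:ℝ) < d := by rw [hd_def]; linarith
  set χ : ℝ → ℝ := fun s => Real.smoothTransition ((R^2 - s)/d) with hχ_def
  set φ : EuclideanSpace ℝ (Fin n) → ℝ := fun x => χ (‖x‖^2) with hφ_def
  set v : EuclideanSpace ℝ (Fin n) → ℝ := fun x => u x + φ x * (1 - u x) with hv_def
  -- basic facts about φ
  have hφ01 : ∀ x, 0 ≤ φ x ∧ φ x ≤ 1 := fun x =>
    ⟨Real.smoothTransition.nonneg _, Real.smoothTransition.le_one _⟩
  have hr2 : r^2 = R^2 - R + 1/4 := by rw [hr_def]; ring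
  have hφ1 : ∀ x ∈ Metric.ball (0 : EuclideanSpace ℝ (Fin n)) r, φ x = 1 := by
    intro x hx
    rw [Metric.mem_ball, dist_zero_right] at hx
    apply Real.smoothTransition.one_of_one_le
    have hx' : ‖x‖ < R - 1/2 := by rw [hr_def] at hx; exact hx
    rw [le_div_iff₀ hd, hd_def]
    nlinarith [norm_nonneg x, hx', hR]
  have hφ0 : ∀ x ∉ Metric.ball (0 : EuclideanSpace ℝ (Fin n)) R, φ x = 0 := by
    intro x hx
    rw [Metric.mem_ball, dist_zero_right, not_lt] at hx
    apply Real.smoothTransition.zero_of_nonpos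
    apply div_nonpos_of_nonpos_of_nonneg _ hd.le
    nlinarith [hx]
  have hvout : ∀ x ∉ Metric.ball (0 : EuclideanSpace ℝ (Fin n)) R, v x = u x := by
    intro x hx; simp [hv_def, hφ0 x hx]
  have hv1 : ∀ x ∈ Metric.ball (0 : EuclideanSpace ℝ (Fin n)) r, v x = 1 := by
    intro x hx; simp [hv_def, hφ1 x hx]
  -- smoothness
  have hTd : Differentiable ℝ Real.smoothTransition :=
    (Real.smoothTransition.contDiff (n := ⊤)).differentiable (by simp)
  have hχc : ContDiff ℝ 1 χ :=
    (Real.smoothTransition.contDiff (n := 1)).comp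
      ((contDiff_const.sub contDiff_id).div_const d)
  have hφc : ContDiff ℝ 1 φ := hχc.comp (contDiff_norm_sq ℝ)
  have hvc : ContDiff ℝ 1 v := hu.add (hφc.mul (contDiff_const.sub hu))
  -- derivative of χ
  have hchi : ∀ s : ℝ, HasDerivAt χ
      (deriv Real.smoothTransition ((R^2 - s)/d) * (-1/d)) s := by
    intro s
    have h1 : HasDerivAt (fun s : ℝ => (R^2 - s)/d) (-1/d) s := by
      simpa using ((hasDerivAt_id s).const_sub (R^2)).div_const d
    exact (hTd _).hasDerivAt.comp s h1
  clear_value χ φ v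
  -- derivative of v and its bound on the ball
  have hvbound : ∀ x ∈ Metric.ball (0 : EuclideanSpace ℝ (Fin n)) R, ‖gradient v x‖ ≤ K := by
    intro x hx
    rw [Metric.mem_ball, dist_zero_right] at hx
    have hsq : HasFDerivAt (fun y : EuclideanSpace ℝ (Fin n) => ‖y‖^2) (2 • (innerSL ℝ x)) x :=
      (hasStrictFDerivAt_norm_sq x).hasFDerivAt
    set c : ℝ := deriv Real.smoothTransition ((R^2 - ‖x‖^2)/d) * (-1/d) with hc_def
    clear_value c
    have hφd : HasFDerivAt φ (c • (2 • (innerSL ℝ x))) x := by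
      rw [hc_def, hφ_def]
      exact (hchi (‖x‖^2)).comp_hasFDerivAt x hsq
    have hDu : HasFDerivAt u (fderiv ℝ u x) x := (hu.differentiable one_ne_zero x).hasFDerivAt
    have hvd : HasFDerivAt v
        (fderiv ℝ u x + (φ x • (-(fderiv ℝ u x)) + (1 - u x) • (c • (2 • (innerSL ℝ x))))) x := by
      rw [hv_def]
      exact hDu.add (hφd.mul (hDu.const_sub 1))
    have hDu_norm : ‖fderiv ℝ u x‖ ≤ C₀ := by
      have := hgrad x
      rwa [gradient, LinearIsometryEquiv.norm_map] at this
    have hc_bound : |c| ≤ M / d := by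
      rw [hc_def, abs_mul]
      have h1 : |(-1:ℝ)/d| = 1/d := by rw [abs_div]; simp [abs_of_pos hd]
      rw [h1, div_eq_mul_one_div M d]
      exact mul_le_mul_of_nonneg_right (hM _) (by positivity)
    have hinner_norm : ‖(2:ℕ) • (innerSL ℝ x)‖ ≤ 2 * ‖x‖ := by
      rw [two_smul]
      calc ‖innerSL ℝ x + innerSL ℝ x‖ ≤ ‖innerSL ℝ x‖ + ‖innerSL ℝ x‖ := norm_add_le _ _
        _ = 2 * ‖x‖ := by rw [innerSL_apply_norm]; ring
    have hφd_norm : ‖c • (2 • (innerSL ℝ x))‖ ≤ 3 * M := by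
      refine (ContinuousLinearMap.opNorm_smul_le c (2 • (innerSL ℝ x))).trans ?_
      calc ‖c‖ * ‖(2:ℕ) • (innerSL ℝ x)‖ ≤ (M/d) * (2 * ‖x‖) := by
            apply mul_le_mul hc_bound hinner_norm (norm_nonneg _) (by positivity)
        _ ≤ 3 * M := by
            rw [div_mul_eq_mul_div, mul_comm, div_le_iff₀ hd, hd_def]
            have hxR : ‖x‖ ≤ R := hx.le
            nlinarith [mul_le_mul_of_nonneg_left hxR hM0, hM0, norm_nonneg x]
    have hgv : ‖gradient v x‖ = ‖fderiv ℝ v x‖ := by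
      rw [gradient, LinearIsometryEquiv.norm_map]
    rw [hgv, hvd.fderiv]
    calc ‖fderiv ℝ u x + (φ x • (-(fderiv ℝ u x)) + (1 - u x) • (c • (2 • (innerSL ℝ x))))‖
        ≤ ‖fderiv ℝ u x‖ + (‖φ x • (-(fderiv ℝ u x))‖ + ‖(1 - u x) • (c • (2 • (innerSL ℝ x)))‖) := by
          refine (norm_add_le _ _).trans ?_
          exact add_le_add le_rfl (norm_add_le _ _)
      _ ≤ C₀ + (1 * C₀ + 2 * (3 * M)) := by
          refine add_le_add hDu_norm (add_le_add ?_ ?_)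
          · refine (ContinuousLinearMap.opNorm_smul_le (φ x) (-(fderiv ℝ u x))).trans ?_
            refine mul_le_mul ?_ ((norm_neg (fderiv ℝ u x)).le.trans hDu_norm)
              (norm_nonneg _) zero_le_one
            rw [Real.norm_eq_abs, abs_of_nonneg (hφ01 x).1]; exact (hφ01 x).2
          · refine (ContinuousLinearMap.opNorm_smul_le (1 - u x) (c • (2 • (innerSL ℝ x)))).trans ?_
            refine mul_le_mul ?_ hφd_norm (norm_nonneg _) (by norm_num)
            rw [Real.norm_eq_abs]
            have h1 := hu1 x
            rw [Set.mem_Ioo] at h1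
            rw [abs_le]; constructor <;> nlinarith [h1.1, h1.2]
      _ = K := by rw [hK_def]; ring
  -- |v| ≤ 1 everywhere
  have hvle : ∀ x, (1 - v x ^ 2)^2 ≤ 1 := by
    intro x
    have h1 := hu1 x
    rw [Set.mem_Ioo] at h1
    have h2 := hφ01 x
    have hve : v x = u x + φ x * (1 - u x) := by rw [hv_def]
    have hub : v x ≤ 1 := by rw [hve]; nlinarith [h1.1, h1.2, h2.1, h2.2]
    have hlb : -1 ≤ v x := by rw [hve]; nlinarith [h1.1, h1.2, h2.1, h2.2]
    have h01 : 0 ≤ 1 - v x ^ 2 := by nlinarith [hub, hlb]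
    have h11 : 1 - v x ^ 2 ≤ 1 := by nlinarith [sq_nonneg (v x)]
    nlinarith [h01, h11]
  -- integrand of v
  set fv : EuclideanSpace ℝ (Fin n) → ℝ :=
    fun x => ‖gradient v x‖ ^ 2 / 2 + (1 - v x ^ 2) ^ 2 / 4 with hfv_def
  clear_value fv
  have hfv_bound : ∀ x ∈ Metric.ball (0 : EuclideanSpace ℝ (Fin n)) R, fv x ≤ K₂ := by
    intro x hx
    have h1 := hvbound x hx
    have h2 := hvle x
    have h3 := norm_nonneg (gradient v x)
    have e1 : fv x = ‖gradient v x‖ ^ 2 / 2 + (1 - v x ^ 2) ^ 2 / 4 := by rw [hfv_def]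
    rw [e1, hK₂_def]
    have h4 : ‖gradient v x‖^2 ≤ K^2 := pow_le_pow_left₀ h3 h1 2
    linarith [h4, h2]
  have hfv_zero : ∀ x ∈ Metric.ball (0 : EuclideanSpace ℝ (Fin n)) r, fv x = 0 := by
    intro x hx
    have hev : v =ᶠ[nhds x] fun _ => (1:ℝ) :=
      Filter.eventuallyEq_of_mem (Metric.isOpen_ball.mem_nhds hx) hv1
    have hfd : fderiv ℝ v x = 0 := by
      rw [hev.fderiv_eq]; exact fderiv_const_apply 1
    have hg : gradient v x = 0 := by
      rw [gradient, hfd, map_zero]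
    simp [hfv_def, hg, hv1 x hx]
  -- continuity and integrability of fv
  have hgradc : Continuous (gradient v) := by
    have h1 : Continuous (fderiv ℝ v) := hvc.continuous_fderiv one_ne_zero
    exact ((InnerProductSpace.toDual ℝ (EuclideanSpace ℝ (Fin n))).symm.continuous).comp h1
  have hfvc : Continuous fv := by
    rw [hfv_def]
    apply Continuous.add
    · exact (hgradc.norm.pow 2).div_const 2
    · exact ((continuous_const.sub (hvc.continuous.pow 2)).pow 2).div_const 4
  have hfv_int : IntegrableOn fv (Metric.ball (0 : EuclideanSpace ℝ (Fin n)) R) :=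
    (hfvc.continuousOn.integrableOn_compact
      (isCompact_closedBall (0 : EuclideanSpace ℝ (Fin n)) R)).mono_set
      Metric.ball_subset_closedBall
  -- the annulus
  set A : Set (EuclideanSpace ℝ (Fin n)) :=
    Metric.ball (0 : EuclideanSpace ℝ (Fin n)) R \ Metric.ball (0 : EuclideanSpace ℝ (Fin n)) r
    with hA_def
  have hAm : MeasurableSet A := measurableSet_ball.diff measurableSet_ball
  have hg_int : IntegrableOn (A.indicator fun _ => K₂)
      (Metric.ball (0 : EuclideanSpace ℝ (Fin n)) R) :=
    (integrableOn_const measure_ball_lt_top.ne).indicator hAm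
  have h_pw : ∀ x ∈ Metric.ball (0 : EuclideanSpace ℝ (Fin n)) R,
      fv x ≤ (A.indicator fun _ => K₂) x := by
    intro x hx
    by_cases hxr : x ∈ Metric.ball (0 : EuclideanSpace ℝ (Fin n)) r
    · have hnA : x ∉ A := fun h => h.2 hxr
      rw [Set.indicator_of_notMem hnA, hfv_zero x hxr]
    · have hxA : x ∈ A := ⟨hx, hxr⟩
      rw [Set.indicator_of_mem hxA]
      exact hfv_bound x hx
  -- volume computation
  have hsub : Metric.ball (0 : EuclideanSpace ℝ (Fin n)) r
      ⊆ Metric.ball (0 : EuclideanSpace ℝ (Fin n)) R := Metric.ball_subset_ball hrR.le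
  have hvA : volume A = volume (Metric.ball (0 : EuclideanSpace ℝ (Fin n)) R)
      - volume (Metric.ball (0 : EuclideanSpace ℝ (Fin n)) r) :=
    measure_diff hsub measurableSet_ball.nullMeasurableSet measure_ball_lt_top.ne
  have hvball : ∀ ρ : ℝ, 0 < ρ → volume (Metric.ball (0 : EuclideanSpace ℝ (Fin n)) ρ)
      = ENNReal.ofReal (ρ ^ n) * volume (Metric.ball (0 : EuclideanSpace ℝ (Fin n)) 1) := by
    intro ρ hρ
    simpa [finrank_euclideanSpace_fin] using
      MeasureTheory.Measure.addHaar_ball_of_pos volume (0 : EuclideanSpace ℝ (Fin n)) hρ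
  have hvA_real : (volume A).toReal = (R^n - r^n) * vbr := by
    rw [hvA, hvball R hRpos, hvball r hr0]
    rw [ENNReal.toReal_sub_of_le
      (mul_le_mul_left (ENNReal.ofReal_le_ofReal (pow_le_pow_left₀ hr0.le hrR.le n)) _)
      (ENNReal.mul_ne_top ENNReal.ofReal_ne_top measure_ball_lt_top.ne)]
    rw [ENNReal.toReal_mul, ENNReal.toReal_mul,
      ENNReal.toReal_ofReal (pow_nonneg hRpos.le n), ENNReal.toReal_ofReal (pow_nonneg hr0.le n)]
    rw [hvbr_def]; ring
  -- put it together
  have step1 := hmin R hRpos v hvc hvout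
  have step2 : (∫ x in Metric.ball (0 : EuclideanSpace ℝ (Fin n)) R, fv x)
      ≤ ∫ x in Metric.ball (0 : EuclideanSpace ℝ (Fin n)) R, (A.indicator fun _ => K₂) x :=
    setIntegral_mono_on hfv_int hg_int measurableSet_ball h_pw
  have step3 : (∫ x in Metric.ball (0 : EuclideanSpace ℝ (Fin n)) R,
      (A.indicator fun _ => K₂) x) = (volume A).toReal * K₂ := by
    rw [setIntegral_indicator hAm,
      Set.inter_eq_self_of_subset_right Set.diff_subset, setIntegral_const, smul_eq_mul]
    rfl
  have hK₂0 : 0 ≤ K₂ := by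
    rw [hK₂_def]
    positivity
  have hpow0 : (0:ℝ) ≤ R ^ (n-1) := pow_nonneg hRpos.le _
  have hfinal : (volume A).toReal * K₂ ≤ K₂ * ((n:ℝ) * vbr) * R ^ (n - 1) := by
    rw [hvA_real]
    have h1 : R^n - r^n ≤ (n:ℝ) * R^(n-1) := by
      have h2 := ac_pow_sub_pow hr0.le hrR.le n
      have h3 : R - r = 1/2 := by rw [hr_def]; ring
      rw [h3] at h2
      nlinarith [mul_nonneg (Nat.cast_nonneg (α := ℝ) n) hpow0]
    calc (R^n - r^n) * vbr * K₂ ≤ ((n:ℝ) * R^(n-1)) * vbr * K₂ :=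
          mul_le_mul_of_nonneg_right (mul_le_mul_of_nonneg_right h1 hvbr0) hK₂0
      _ = K₂ * ((n:ℝ) * vbr) * R ^ (n - 1) := by ring
  calc (∫ x in Metric.ball (0 : EuclideanSpace ℝ (Fin n)) R,
        (‖gradient u x‖ ^ 2 / 2 + (1 - u x ^ 2) ^ 2 / 4))
      ≤ ∫ x in Metric.ball (0 : EuclideanSpace ℝ (Fin n)) R,
        (‖gradient v x‖ ^ 2 / 2 + (1 - v x ^ 2) ^ 2 / 4) := step1
    _ = ∫ x in Metric.ball (0 : EuclideanSpace ℝ (Fin n)) R, fv x := by simp only [hfv_def]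
    _ ≤ ∫ x in Metric.ball (0 : EuclideanSpace ℝ (Fin n)) R, (A.indicator fun _ => K₂) x := step2
    _ = (volume A).toReal * K₂ := step3
    _ ≤ K₂ * ((n:ℝ) * vbr) * R ^ (n - 1) := hfinal
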